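/- Let q be a prime power, h ≥ 1, d ≥ 2 integers, and β ∈ F_{q^{h+1}} an element of degree d+1 over F_q. Let φ : F_{q^{h+1}}^* → F_{q^{h+1}}^*/F_q^* be the quotient map. Then the set SG(q,β) = {φ(1)} ∪ {φ(β + a) : a ∈ F_q} is a B_d set in the quotient group F_{q^{h+1}}^*/F_q^*, and it has exactly q + 1 elements. -/

import Mathlib

open Polynomial

/-- Multiplicative `B_h[g]` property. -/
def IsMulBhg {G : Type*} [CommMonoid G] (A : Set G) (h g : ℕ) : Prop :=
  ∀ b : G, ∀ s : Finset (Multiset G),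
    (∀ m ∈ s, Multiset.card m = h ∧ (∀ x ∈ m, x ∈ A) ∧ m.prod = b) → s.card ≤ g

theorem stmt_8 {Fq E : Type*} [Field Fq] [Fintype Fq] [Field E] [Fintype E] [Algebra Fq E]
    (q h d : ℕ) (hq : Fintype.card Fq = q) (hh : 1 ≤ h) (hd : 2 ≤ d)
    (hcard : Fintype.card E = q ^ (h + 1))
    (β : E) (hdeg : (minpoly Fq β).natDegree = d + 1) :
    IsMulBhg ({(1 : Eˣ ⧸ (Units.map (algebraMap Fq E).toMonoidHom).range)} ∪
        {x : Eˣ ⧸ (Units.map (algebraMap Fq E).toMonoidHom).range | ∃ a : Fq, ∃ u : Eˣ,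
          (u : E) = β + algebraMap Fq E a ∧
          x = QuotientGroup.mk' (Units.map (algebraMap Fq E).toMonoidHom).range u}) d 1 ∧
    Set.ncard ({(1 : Eˣ ⧸ (Units.map (algebraMap Fq E).toMonoidHom).range)} ∪
        {x : Eˣ ⧸ (Units.map (algebraMap Fq E).toMonoidHom).range | ∃ a : Fq, ∃ u : Eˣ,
          (u : E) = β + algebraMap Fq E a ∧
          x = QuotientGroup.mk' (Units.map (algebraMap Fq E).toMonoidHom).range u})
      = q + 1 := by
  set K := (Units.map (algebraMap Fq E).toMonoidHom).range with hK
  -- β is not in the image of Fq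
  have hβ : ∀ c : Fq, β ≠ algebraMap Fq E c := by
    intro c hc
    rw [hc, minpoly.eq_X_sub_C, natDegree_X_sub_C] at hdeg
    omega
  have hne : ∀ a : Fq, β + algebraMap Fq E a ≠ 0 := by
    intro a h0
    exact hβ (-a) (by rw [map_neg]; exact eq_neg_of_add_eq_zero_left h0)
  set u : Fq → Eˣ := fun a => Units.mk0 _ (hne a) with hu
  set f : Fq → Eˣ ⧸ K := fun a => QuotientGroup.mk' K (u a) with hf
  -- the set equals insert 1 (range f)
  have hSet : {x : Eˣ ⧸ K | ∃ a : Fq, ∃ v : Eˣ,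
      (v : E) = β + algebraMap Fq E a ∧ x = QuotientGroup.mk' K v} = Set.range f := by
    ext x
    constructor
    · rintro ⟨a, v, hv, rfl⟩
      refine ⟨a, ?_⟩
      rw [hf]
      exact congrArg (QuotientGroup.mk' K) (Units.ext (by rw [hv]; rfl))
    · rintro ⟨a, rfl⟩
      exact ⟨a, u a, rfl, rfl⟩
  -- polynomials
  set P : Multiset Fq → Fq[X] := fun t => ((t.map Neg.neg).map fun a => X - C a).prod with hPdef
  have hPm : ∀ t, (P t).Monic := fun t =>
    monic_multiset_prod_of_monic _ _ (by simp [monic_X_sub_C])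
  have hPdeg : ∀ t, (P t).natDegree = Multiset.card t := by
    intro t
    simp only [hPdef]
    rw [natDegree_multiset_prod_of_monic _ (fun p hp => by
      rw [Multiset.mem_map] at hp; obtain ⟨a, -, rfl⟩ := hp; exact monic_X_sub_C a)]
    simp [Multiset.map_map]
  have hProots : ∀ t, (P t).roots = t.map Neg.neg := fun t =>
    roots_multiset_prod_X_sub_C _
  have hPaeval : ∀ t : Multiset Fq, aeval β (P t) = (((t.map u).prod : Eˣ) : E) := by
    intro t
    have l2 : (((t.map u).prod : Eˣ) : E) = (t.map (fun a => β + algebraMap Fq E a)).prod := by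
      rw [show (((t.map u).prod : Eˣ) : E) = (Units.coeHom E) (t.map u).prod from rfl,
        map_multiset_prod, Multiset.map_map]
      rfl
    simp only [hPdef, map_multiset_prod, Multiset.map_map, l2]
    congr 1
    apply Multiset.map_congr rfl
    intro a _
    simp [sub_neg_eq_add]
  -- key uniqueness
  have key : ∀ t₁ t₂ : Multiset Fq, Multiset.card t₁ ≤ d → Multiset.card t₂ ≤ d →
      QuotientGroup.mk' K ((t₁.map u).prod) = QuotientGroup.mk' K ((t₂.map u).prod) →
      t₁ = t₂ := by
    intro t₁ t₂ h1 h2 heq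
    rw [QuotientGroup.mk'_eq_mk'] at heq
    obtain ⟨z, hz, hmul⟩ := heq
    obtain ⟨c, rfl⟩ := hz
    have hmulE := congrArg (Units.coeHom E) hmul
    simp only [map_mul, Units.coeHom_apply, Units.coe_map,
      RingHom.toMonoidHom_eq_coe, MonoidHom.coe_coe] at hmulE
    have hE : aeval β (P t₁ * C (c : Fq)) = aeval β (P t₂) := by
      rw [map_mul, hPaeval, hPaeval, aeval_C]
      exact hmulE
    have hpoly : P t₁ * C (c : Fq) = P t₂ := by
      by_contra hne'
      have h0 : aeval β (P t₁ * C (c : Fq) - P t₂) = 0 := by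
        rw [map_sub, hE, sub_self]
      have hnz : P t₁ * C (c : Fq) - P t₂ ≠ 0 := sub_ne_zero.mpr hne'
      have hdle := minpoly.degree_le_of_ne_zero Fq β hnz h0
      have hdnat : (minpoly Fq β).natDegree ≤ (P t₁ * C (c : Fq) - P t₂).natDegree :=
        natDegree_le_natDegree hdle
      have hb1 : (P t₁ * C (c : Fq)).natDegree ≤ d := by
        refine le_trans (natDegree_mul_le) ?_
        simp [hPdeg, natDegree_C, h1]
      have hb2 : (P t₂).natDegree ≤ d := by rw [hPdeg]; exact h2
      have := le_trans hdnat (le_trans (natDegree_sub_le _ _) (max_le hb1 hb2))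
      omega
    have hc1 : (c : Fq) = 1 := by
      have hl := congrArg leadingCoeff hpoly
      rwa [leadingCoeff_mul, (hPm t₁).leadingCoeff, (hPm t₂).leadingCoeff, one_mul,
        leadingCoeff_C] at hl
    rw [hc1, map_one, mul_one] at hpoly
    have hr := congrArg roots hpoly
    rw [hProots, hProots] at hr
    exact Multiset.map_injective neg_injective hr
  have hprodf : ∀ t : Multiset Fq, (t.map f).prod = QuotientGroup.mk' K ((t.map u).prod) := by
    intro t
    rw [show t.map f = (t.map u).map (QuotientGroup.mk' K) by simp [Multiset.map_map, hf],
      ← map_multiset_prod]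
  set S : Set (Eˣ ⧸ K) := {(1 : Eˣ ⧸ K)} ∪
      {x : Eˣ ⧸ K | ∃ a : Fq, ∃ v : Eˣ,
        (v : E) = β + algebraMap Fq E a ∧ x = QuotientGroup.mk' K v} with hS
  have hS' : S = insert 1 (Set.range f) := by
    rw [hS, hSet, Set.singleton_union]
  -- decoding
  have decode : ∀ m : Multiset (Eˣ ⧸ K), (∀ x ∈ m, x ∈ S) →
      ∃ t : Multiset Fq, Multiset.card t ≤ Multiset.card m ∧
        m = t.map f + Multiset.replicate (Multiset.card m - Multiset.card t) 1 := by
    intro m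
    induction m using Multiset.induction_on with
    | empty => exact fun _ => ⟨0, by simp⟩
    | cons x m ih =>
      intro hmem
      obtain ⟨t, htc, hteq⟩ := ih (fun y hy => hmem y (Multiset.mem_cons_of_mem hy))
      have hx := hmem x (Multiset.mem_cons_self _ _)
      rw [hS', Set.mem_insert_iff] at hx
      rcases hx with hx1 | ⟨a, rfl⟩
      · refine ⟨t, le_trans htc (by simp), ?_⟩
        rw [hx1]
        have hcc : Multiset.card ((1 : Eˣ ⧸ K) ::ₘ m) - Multiset.card t
            = (Multiset.card m - Multiset.card t) + 1 := by
          rw [Multiset.card_cons]; omega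
        rw [hcc, Multiset.replicate_succ, Multiset.add_cons, ← hteq]
      · refine ⟨a ::ₘ t, by simpa using htc, ?_⟩
        have hcc : Multiset.card (f a ::ₘ m) - Multiset.card (a ::ₘ t)
            = Multiset.card m - Multiset.card t := by
          simp only [Multiset.card_cons]; omega
        rw [hcc, Multiset.map_cons, Multiset.cons_add, ← hteq]
  constructor
  · -- B_d property
    intro b s hs
    by_contra hlt
    push_neg at hlt
    obtain ⟨m₁, hm₁, m₂, hm₂, hne12⟩ := Finset.one_lt_card.mp hlt
    obtain ⟨hc₁, hmem₁, hp₁⟩ := hs m₁ hm₁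
    obtain ⟨hc₂, hmem₂, hp₂⟩ := hs m₂ hm₂
    obtain ⟨t₁, ht₁c, ht₁⟩ := decode m₁ hmem₁
    obtain ⟨t₂, ht₂c, ht₂⟩ := decode m₂ hmem₂
    have hpr : ∀ (t : Multiset Fq) (k : ℕ),
        ((t.map f) + Multiset.replicate k 1).prod = QuotientGroup.mk' K ((t.map u).prod) := by
      intro t k
      rw [Multiset.prod_add, Multiset.prod_replicate, one_pow]
      exact (mul_one _).trans (hprodf t)
    have heq : QuotientGroup.mk' K ((t₁.map u).prod) = QuotientGroup.mk' K ((t₂.map u).prod) := by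
      rw [← hpr t₁ (Multiset.card m₁ - Multiset.card t₁), ← hpr t₂ (Multiset.card m₂ - Multiset.card t₂),
        ← ht₁, ← ht₂, hp₁, hp₂]
    have htt : t₁ = t₂ := key t₁ t₂ (by omega) (by omega) heq
    apply hne12
    rw [ht₁, ht₂, htt, hc₁, hc₂]
  · -- cardinality
    have hfinj : Function.Injective f := by
      intro a b hab
      have : ({a} : Multiset Fq) = {b} := by
        apply key
        · rw [Multiset.card_singleton]; omega
        · rw [Multiset.card_singleton]; omega
        · simpa [hf] using hab
      simpa using this
    have h1nr : (1 : Eˣ ⧸ K) ∉ Set.range f := by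
      rintro ⟨a, ha⟩
      have : ({a} : Multiset Fq) = 0 := by
        apply key
        · rw [Multiset.card_singleton]; omega
        · simp
        · rw [Multiset.map_singleton, Multiset.prod_singleton, Multiset.map_zero,
            Multiset.prod_zero, map_one]
          rw [hf] at ha
          exact ha
      simp at this
    rw [hS', Set.ncard_insert_of_notMem h1nr (Set.finite_range f),
      ← Nat.card_coe_set_eq, Nat.card_range_of_injective hfinj,
      Nat.card_eq_fintype_card, hq]
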